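/- For every μ > 0, ω > 0, and x₀, v ∈ ℝ, the function u(x,t) = e^{i(v/2)x} e^{-i(v²/4)t} e^{iωt} ω^{1/(2μ)} (μ+1)^{1/(2μ)} sech^{1/μ}(μ√ω (x - x₀ - v t)) is a solution of the focusing nonlinear Schrödinger equation i ∂u/∂t = -∂²u/∂x² - |u|^{2μ} u for all x ∈ ℝ and t ∈ ℝ. -/

import Mathlib

open Real MeasureTheory

/-- `sech y = 1 / cosh y`. -/
noncomputable def sech (y : ℝ) : ℝ := 1 / Real.cosh y

/-- The travelling soliton of the focusing NLS with power nonlinearity of exponent `μ`: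
`u(x,t) = e^{i(v/2)x} e^{-i(v²/4)t} e^{iωt} ω^{1/(2μ)} (μ+1)^{1/(2μ)}
          sech^{1/μ}(μ√ω (x - x₀ - v t))`. -/
noncomputable def solitonWave (μ ω x₀ v : ℝ) (x t : ℝ) : ℂ :=
  Complex.exp (Complex.I * (v / 2) * x) *
  Complex.exp (-Complex.I * (v ^ 2 / 4) * t) *
  Complex.exp (Complex.I * ω * t) *
  ((ω ^ (1 / (2 * μ)) : ℝ) : ℂ) * (((μ + 1) ^ (1 / (2 * μ)) : ℝ) : ℂ) *
  ((sech (μ * Real.sqrt ω * (x - x₀ - v * t)) ^ (1 / μ) : ℝ) : ℂ)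

lemma sech_pos (y : ℝ) : 0 < sech y := by
  unfold sech; positivity

lemma hasDerivAt_sech (y : ℝ) : HasDerivAt sech (-(Real.tanh y * sech y)) y := by
  have h2 := (Real.hasDerivAt_cosh y).inv (Real.cosh_pos y).ne'
  have hfun : sech = fun z => (Real.cosh z)⁻¹ := funext fun z => by simp [sech, one_div]
  rw [hfun]
  refine h2.congr_deriv ?_
  symm
  rw [Real.tanh_eq_sinh_div_cosh]
  have hc := (Real.cosh_pos y).ne'
  field_simp

lemma hasDerivAt_tanh (y : ℝ) : HasDerivAt Real.tanh (sech y ^ 2) y := by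
  have h := (Real.hasDerivAt_sinh y).div (Real.hasDerivAt_cosh y) (Real.cosh_pos y).ne'
  have hfun : Real.tanh = fun z => Real.sinh z / Real.cosh z :=
    funext fun z => Real.tanh_eq_sinh_div_cosh z
  rw [hfun]
  refine h.congr_deriv ?_
  symm
  have h1 := Real.cosh_sq_sub_sinh_sq y
  have hc := (Real.cosh_pos y).ne'
  rw [sech]
  field_simp
  nlinarith [h1]

lemma hasDerivAt_sechP (p y : ℝ) :
    HasDerivAt (fun z => sech z ^ p) (-(p * Real.tanh y * sech y ^ p)) y := by
  have h := (hasDerivAt_sech y).rpow_const (p := p) (Or.inl (sech_pos y).ne')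
  convert h using 1
  have hs : sech y ^ (p - 1) * sech y = sech y ^ p := by
    rw [← Real.rpow_add_one (sech_pos y).ne' (p - 1)]
    ring_nf
  rw [← hs]; ring

lemma hasDerivAt_sechP' (p y : ℝ) :
    HasDerivAt (fun z => -(p * Real.tanh z * sech z ^ p))
      (-(p * sech y ^ 2 * sech y ^ p) + p ^ 2 * Real.tanh y ^ 2 * sech y ^ p) y := by
  have h := (((hasDerivAt_tanh y).const_mul p).mul (hasDerivAt_sechP p y)).neg
  refine h.congr_deriv ?_
  ring

lemma tanh_sq' (y : ℝ) : Real.tanh y ^ 2 = 1 - sech y ^ 2 := by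
  rw [Real.tanh_eq_sinh_div_cosh]
  have h := Real.cosh_sq_sub_sinh_sq y
  have hc := (Real.cosh_pos y).ne'
  rw [sech]
  field_simp
  linarith [h]

lemma key1 (a K : ℂ) (F F' : ℝ → ℝ) (y : ℝ) (hF : HasDerivAt F (F' y) y) :
    HasDerivAt (fun z : ℝ => Complex.exp (a * z) * K * ((F z : ℝ) : ℂ))
      (Complex.exp (a * y) * K * (a * (F y : ℂ) + (F' y : ℂ))) y := by
  have h1 : HasDerivAt (fun z : ℝ => Complex.exp (a * (z : ℂ))) (Complex.exp (a * y) * a) y := by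
    have h0 : HasDerivAt (fun z : ℝ => a * (z : ℂ)) a y := by
      simpa using ((hasDerivAt_id y).ofReal_comp).const_mul a
    simpa using h0.cexp
  have h2 := (h1.mul_const K).mul hF.ofReal_comp
  refine h2.congr_deriv ?_
  ring

lemma key2 (a K : ℂ) (F G F' G' : ℝ → ℝ) (y : ℝ)
    (hF : HasDerivAt F (F' y) y) (hG : HasDerivAt G (G' y) y) :
    HasDerivAt (fun z : ℝ => Complex.exp (a * z) * K * ((F z : ℂ) + Complex.I * (G z : ℂ)))
      (Complex.exp (a * y) * K *
        (a * ((F y : ℂ) + Complex.I * (G y : ℂ)) + ((F' y : ℂ) + Complex.I * (G' y : ℂ)))) y := by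
  have h1 : HasDerivAt (fun z : ℝ => Complex.exp (a * (z : ℂ))) (Complex.exp (a * y) * a) y := by
    have h0 : HasDerivAt (fun z : ℝ => a * (z : ℂ)) a y := by
      simpa using ((hasDerivAt_id y).ofReal_comp).const_mul a
    simpa using h0.cexp
  have h3 : HasDerivAt (fun z : ℝ => ((F z : ℂ) + Complex.I * (G z : ℂ)))
      ((F' y : ℂ) + Complex.I * (G' y : ℂ)) y :=
    hF.ofReal_comp.add (hG.ofReal_comp.const_mul Complex.I)
  have h2 := (h1.mul_const K).mul h3
  refine h2.congr_deriv ?_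
  ring

/-- for every `μ > 0`, `ω > 0`, `x₀, v ∈ ℝ`, the function `solitonWave μ ω x₀ v`
solves the focusing NLS `i ∂u/∂t = -∂²u/∂x² - |u|^{2μ} u` for all `x, t ∈ ℝ`. -/
theorem soliton_solves_NLS (μ ω x₀ v : ℝ) (hμ : 0 < μ) (hω : 0 < ω) :
    ∀ x t : ℝ,
      Complex.I * deriv (fun s : ℝ => solitonWave μ ω x₀ v x s) t =
        - deriv (deriv (fun y : ℝ => solitonWave μ ω x₀ v y t)) x
        - ((‖solitonWave μ ω x₀ v x t‖ ^ (2 * μ) : ℝ) : ℂ) *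
            solitonWave μ ω x₀ v x t := by
  intro x t
  set c := μ * Real.sqrt ω with hc
  set p := 1 / μ with hp
  set A : ℂ := ((ω ^ (1 / (2 * μ)) : ℝ) : ℂ) * (((μ + 1) ^ (1 / (2 * μ)) : ℝ) : ℂ) with hA
  -- time direction
  set b : ℂ := -Complex.I * (v ^ 2 / 4) + Complex.I * ω with hb
  set K2 : ℂ := Complex.exp (Complex.I * (v / 2) * x) * A with hK2
  set F2 : ℝ → ℝ := fun s => sech (-(c * v) * s + c * (x - x₀)) ^ p with hF2def
  set F2' : ℝ → ℝ := fun s =>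
    -(p * Real.tanh (-(c * v) * s + c * (x - x₀)) *
        sech (-(c * v) * s + c * (x - x₀)) ^ p) * -(c * v) with hF2'def
  have hF2 : HasDerivAt F2 (F2' t) t := by
    have hlin : HasDerivAt (fun s : ℝ => -(c * v) * s + c * (x - x₀)) (-(c * v)) t := by
      simpa using ((hasDerivAt_id t).const_mul (-(c * v))).add_const (c * (x - x₀))
    simp only [hF2def, hF2'def]
    simpa [Function.comp_def] using (hasDerivAt_sechP p (-(c * v) * t + c * (x - x₀))).comp t hlin
  have hfun2 : (fun s : ℝ => solitonWave μ ω x₀ v x s)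
      = fun s : ℝ => Complex.exp (b * s) * K2 * ((F2 s : ℝ) : ℂ) := by
    funext s
    simp only [solitonWave, hF2def, hK2, hA]
    rw [show μ * Real.sqrt ω * (x - x₀ - v * s) = -(c * v) * s + c * (x - x₀) by
      rw [hc]; ring]
    rw [show b * (s : ℂ) = -Complex.I * (v ^ 2 / 4) * s + Complex.I * ω * s by rw [hb]; ring,
      Complex.exp_add, ← hp]
    ring
  -- space direction, first derivative
  set K1 : ℂ := Complex.exp (-Complex.I * (v ^ 2 / 4) * t) * Complex.exp (Complex.I * ω * t) * A
    with hK1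
  set F1 : ℝ → ℝ := fun z => sech (c * z + c * (-x₀ - v * t)) ^ p with hF1def
  set F1' : ℝ → ℝ := fun z =>
    -(p * Real.tanh (c * z + c * (-x₀ - v * t)) *
        sech (c * z + c * (-x₀ - v * t)) ^ p) * c with hF1'def
  set F1'' : ℝ → ℝ := fun z =>
    (-(p * sech (c * z + c * (-x₀ - v * t)) ^ 2 * sech (c * z + c * (-x₀ - v * t)) ^ p)
      + p ^ 2 * Real.tanh (c * z + c * (-x₀ - v * t)) ^ 2 *
          sech (c * z + c * (-x₀ - v * t)) ^ p) * c * c with hF1''def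
  have hlin1 : ∀ z : ℝ, HasDerivAt (fun z : ℝ => c * z + c * (-x₀ - v * t)) c z := by
    intro z
    simpa using ((hasDerivAt_id z).const_mul c).add_const (c * (-x₀ - v * t))
  have hF1 : ∀ z : ℝ, HasDerivAt F1 (F1' z) z := by
    intro z
    simp only [hF1def, hF1'def]
    simpa [Function.comp_def] using
      (hasDerivAt_sechP p (c * z + c * (-x₀ - v * t))).comp z (hlin1 z)
  have hF1'x : HasDerivAt F1' (F1'' x) x := by
    simp only [hF1'def, hF1''def]
    simpa [Function.comp] using
      ((hasDerivAt_sechP' p (c * x + c * (-x₀ - v * t))).comp x (hlin1 x)).mul_const c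
  have hfun1 : (fun y : ℝ => solitonWave μ ω x₀ v y t)
      = fun z : ℝ => Complex.exp (Complex.I * (v / 2) * z) * K1 * ((F1 z : ℝ) : ℂ) := by
    funext z
    simp only [solitonWave, hF1def, hK1, hA]
    rw [show μ * Real.sqrt ω * (z - x₀ - v * t) = c * z + c * (-x₀ - v * t) by
      rw [hc]; ring, ← hp]
    ring
  have hX : ∀ z : ℝ, HasDerivAt (fun y : ℝ => solitonWave μ ω x₀ v y t)
      (Complex.exp (Complex.I * (v / 2) * z) * K1 *
        (Complex.I * (v / 2) * (F1 z : ℂ) + (F1' z : ℂ))) z := by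
    intro z
    rw [hfun1]
    exact key1 (Complex.I * (v / 2)) K1 F1 F1' z (hF1 z)
  have hd1 : deriv (fun y : ℝ => solitonWave μ ω x₀ v y t)
      = fun z : ℝ => Complex.exp (Complex.I * (v / 2) * z) * K1 *
          (Complex.I * (v / 2) * (F1 z : ℂ) + (F1' z : ℂ)) :=
    funext fun z => (hX z).deriv
  have hfun3 : (fun z : ℝ => Complex.exp (Complex.I * (v / 2) * z) * K1 *
        (Complex.I * (v / 2) * (F1 z : ℂ) + (F1' z : ℂ)))
      = fun z : ℝ => Complex.exp (Complex.I * (v / 2) * z) * K1 *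
          ((F1' z : ℂ) + Complex.I * ((v / 2 * F1 z : ℝ) : ℂ)) := by
    funext z
    push_cast
    ring
  have hX2 := key2 (Complex.I * (v / 2)) K1 F1' (fun z => v / 2 * F1 z) F1''
    (fun z => v / 2 * F1' z) x hF1'x ((hF1 x).const_mul (v / 2))
  -- abs
  have habs : ‖solitonWave μ ω x₀ v x t‖
      = ω ^ (1 / (2 * μ)) * (μ + 1) ^ (1 / (2 * μ)) * sech (c * (x - x₀ - v * t)) ^ p := by
    simp only [solitonWave, norm_mul, Complex.norm_exp, Complex.norm_real, Real.norm_eq_abs]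
    rw [← hc, ← hp]
    rw [abs_of_nonneg (Real.rpow_nonneg hω.le _),
      abs_of_nonneg (Real.rpow_nonneg (by linarith) _),
      abs_of_nonneg (Real.rpow_nonneg (sech_pos _).le _)]
    norm_num [Complex.mul_re, Complex.mul_im, Complex.I_re, Complex.I_im, ← Complex.ofReal_pow]
  have habs2 : (ω ^ (1 / (2 * μ)) * (μ + 1) ^ (1 / (2 * μ)) * sech (c * (x - x₀ - v * t)) ^ p)
        ^ (2 * μ)
      = ω * (μ + 1) * sech (c * (x - x₀ - v * t)) ^ 2 := by
    rw [Real.mul_rpow (by positivity) (Real.rpow_nonneg (sech_pos _).le _),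
      Real.mul_rpow (Real.rpow_nonneg hω.le _) (Real.rpow_nonneg (by linarith) _),
      ← Real.rpow_mul hω.le, ← Real.rpow_mul (by linarith : (0:ℝ) ≤ μ + 1),
      ← Real.rpow_mul (sech_pos _).le]
    rw [show 1 / (2 * μ) * (2 * μ) = 1 by field_simp,
      show p * (2 * μ) = 2 by rw [hp]; field_simp]
    rw [Real.rpow_one, Real.rpow_one,
      show ((2 : ℝ)) = ((2 : ℕ) : ℝ) by norm_num, Real.rpow_natCast]
  -- key real identity for the second derivative
  have hkey : F1'' x = ω * sech (c * (x - x₀ - v * t)) ^ p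
      - ω * (μ + 1) * sech (c * (x - x₀ - v * t)) ^ 2 * sech (c * (x - x₀ - v * t)) ^ p := by
    simp only [hF1''def]
    rw [show c * x + c * (-x₀ - v * t) = c * (x - x₀ - v * t) by ring]
    rw [tanh_sq', hp, hc]
    have h2 : Real.sqrt ω * Real.sqrt ω = ω := Real.mul_self_sqrt hω.le
    have hμ0 : μ ≠ 0 := hμ.ne'
    field_simp
    rw [Real.sq_sqrt hω.le]
    ring
  -- assemble
  rw [hfun2, (key1 b K2 F2 F2' t hF2).deriv, hd1, hfun3, hX2.deriv, habs, habs2, hkey]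
  simp only [solitonWave, hF1def, hF1'def, hF2def, hF2'def, hK1, hK2, hA, hb]
  rw [← hc, ← hp]
  rw [show c * x + c * (-x₀ - v * t) = c * (x - x₀ - v * t) by ring]
  rw [show -(c * v) * t + c * (x - x₀) = c * (x - x₀ - v * t) by ring]
  rw [show (-Complex.I * (v ^ 2 / 4) + Complex.I * ω) * (t : ℂ)
      = -Complex.I * (v ^ 2 / 4) * t + Complex.I * ω * t by ring, Complex.exp_add]
  push_cast
  linear_combination (Complex.exp (Complex.I * (v / 2) * x) *
    Complex.exp (-Complex.I * (v ^ 2 / 4) * t) * Complex.exp (Complex.I * ω * t) *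
    ((ω ^ (1 / (2 * μ)) : ℝ) : ℂ) * (((μ + 1) ^ (1 / (2 * μ)) : ℝ) : ℂ) *
    ((sech (c * (x - x₀ - v * t)) ^ p : ℝ) : ℂ) * (ω : ℂ)) * Complex.I_sq
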